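/- For every integer N ≥ 2, ∑_{k=1}^{N−1} 1/ sin^2(π k / N) = (N^2 − 1)/3. -/

import Mathlib

open Real Finset

noncomputable def ee (N : ℕ) (m : ℤ) : ℂ := Complex.exp (2 * π * Complex.I * m / N)

lemma ee_mul (N : ℕ) (a b : ℤ) : ee N a * ee N b = ee N (a + b) := by
  rw [ee, ee, ee, ← Complex.exp_add]
  congr 1
  push_cast
  ring

lemma ee_pow (N : ℕ) (m : ℤ) (j : ℕ) : ee N m ^ j = ee N (m * j) := by
  rw [ee, ee, ← Complex.exp_nat_mul]
  congr 1
  push_cast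
  ring

lemma ee_eq_one_iff (N : ℕ) (hN : 0 < N) (m : ℤ) : ee N m = 1 ↔ (N : ℤ) ∣ m := by
  have hNC : (N : ℂ) ≠ 0 := Nat.cast_ne_zero.mpr hN.ne'
  have hπ : (π : ℂ) ≠ 0 := Complex.ofReal_ne_zero.mpr Real.pi_ne_zero
  have h2 : (2 : ℂ) * π * Complex.I ≠ 0 := by
    simp [hπ, Complex.I_ne_zero]
  rw [ee, Complex.exp_eq_one_iff]
  constructor
  · rintro ⟨n, hn⟩
    refine ⟨n, ?_⟩
    have : (m : ℂ) = N * n := by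
      field_simp at hn
      apply mul_left_cancel₀ h2
      linear_combination (2 * (π : ℂ) * Complex.I) * hn
    exact_mod_cast this
  · rintro ⟨c, rfl⟩
    refine ⟨c, ?_⟩
    field_simp
    push_cast
    ring

lemma ee_orth (N : ℕ) (hN : 0 < N) (m : ℤ) :
    ∑ k ∈ range N, ee N m ^ k = if (N : ℤ) ∣ m then (N : ℂ) else 0 := by
  split_ifs with h
  · rw [(ee_eq_one_iff N hN m).mpr h]
    simp
  · have h1 : ee N m ≠ 1 := fun hc => h ((ee_eq_one_iff N hN m).mp hc)
    rw [geom_sum_eq h1]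
    rw [ee_pow]
    rw [(ee_eq_one_iff N hN (m * N)).mpr ⟨m, mul_comm m N⟩]
    simp

lemma poly_id (z : ℂ) (N : ℕ) :
    (z - 1) * ∑ j ∈ range N, (j : ℂ) * z ^ j
      = ((N : ℂ) - 1) * z ^ N + 1 - ∑ j ∈ range N, z ^ j := by
  induction N with
  | zero => simp
  | succ n ih =>
    rw [Finset.sum_range_succ, Finset.sum_range_succ, mul_add]
    rw [ih]
    push_cast
    ring

lemma keyS (N : ℕ) (z : ℂ) (hzN : z ^ N = 1) (hz1 : z ≠ 1) :
    (z - 1) * ∑ j ∈ range N, (j : ℂ) * z ^ j = N := by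
  rw [poly_id, geom_sum_eq hz1, hzN]
  simp

lemma sum_sq_range (n : ℕ) :
    ∑ j ∈ range n, (j : ℂ) ^ 2 = (n : ℂ) * (n - 1) * (2 * n - 1) / 6 := by
  induction n with
  | zero => simp
  | succ m ih => rw [Finset.sum_range_succ, ih]; push_cast; ring

lemma sum_id_range (n : ℕ) :
    ∑ j ∈ range n, (j : ℂ) = (n : ℂ) * (n - 1) / 2 := by
  induction n with
  | zero => simp
  | succ m ih => rw [Finset.sum_range_succ, ih]; push_cast; ring

lemma term_eq (N : ℕ) (hN : 2 ≤ N) (k : ℕ) (hk1 : 1 ≤ k) (hk2 : k ≤ N - 1) :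
    ((1 / Real.sin (π * k / N) ^ 2 : ℝ) : ℂ)
      = 4 / (N : ℂ) ^ 2 *
        ((∑ j ∈ range N, (j : ℂ) * ee N k ^ j) * (∑ j ∈ range N, (j : ℂ) * ee N (-k) ^ j)) := by
  have hN0 : 0 < N := by omega
  have hkN : k < N := by omega
  have hNC : (N : ℂ) ≠ 0 := Nat.cast_ne_zero.mpr hN0.ne'
  have hndvd : ¬ (N : ℤ) ∣ (k : ℤ) := by
    intro h
    have := Int.le_of_dvd (by exact_mod_cast hk1) h
    omega
  set z := ee N k with hz_def
  set w := ee N (-k) with hw_def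
  have hz1 : z ≠ 1 := fun hc => hndvd ((ee_eq_one_iff N hN0 k).mp hc)
  have hw1 : w ≠ 1 := fun hc => hndvd (by
    have := (ee_eq_one_iff N hN0 (-k)).mp hc
    exact (dvd_neg).mp this)
  have hzN : z ^ N = 1 := by
    rw [hz_def, ee_pow]
    exact (ee_eq_one_iff N hN0 _).mpr ⟨k, by ring⟩
  have hwN : w ^ N = 1 := by
    rw [hw_def, ee_pow]
    exact (ee_eq_one_iff N hN0 _).mpr ⟨-k, by ring⟩
  have hzw : z * w = 1 := by
    rw [hz_def, hw_def, ee_mul]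
    simp [ee]
  have hzθ : z = Complex.exp (((2 * (π * k / N) : ℝ) : ℂ) * Complex.I) := by
    rw [hz_def, ee]
    congr 1
    push_cast
    ring
  have hwθ : w = Complex.exp ((-(2 * (π * k / N) : ℝ) : ℂ) * Complex.I) := by
    rw [hw_def, ee]
    congr 1
    push_cast
    ring
  have hzw2 : z + w = 2 * (Real.cos (2 * (π * k / N)) : ℂ) := by
    rw [hzθ, hwθ, Complex.exp_mul_I, Complex.exp_mul_I, Complex.cos_neg, Complex.sin_neg]
    rw [← Complex.ofReal_cos]
    ring
  have hsinpos : 0 < Real.sin (π * k / N) := by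
    apply Real.sin_pos_of_pos_of_lt_pi
    · have : (0:ℝ) < (k:ℝ) := by exact_mod_cast hk1
      have : (0:ℝ) < (N:ℝ) := by exact_mod_cast hN0
      positivity
    · rw [div_lt_iff₀ (by exact_mod_cast hN0)]
      have hkNR : (k : ℝ) < N := by exact_mod_cast hkN
      nlinarith [Real.pi_pos]
  have hsin0 : Real.sin (π * k / N) ≠ 0 := ne_of_gt hsinpos
  have hreal : (4 : ℝ) * Real.sin (π * k / N) ^ 2 = 2 - 2 * Real.cos (2 * (π * k / N)) := by
    rw [Real.cos_two_mul]
    nlinarith [Real.sin_sq_add_cos_sq (π * k / N)]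
  have hprod : (z - 1) * (w - 1) = 4 * (Real.sin (π * k / N) : ℂ) ^ 2 := by
    have hc : ((2 : ℂ) - 2 * (Real.cos (2 * (π * k / N)) : ℂ)) = 4 * (Real.sin (π * k / N) : ℂ) ^ 2 := by
      exact_mod_cast congrArg Complex.ofReal hreal.symm
    calc (z - 1) * (w - 1) = z * w - (z + w) + 1 := by ring
    _ = 2 - 2 * (Real.cos (2 * (π * k / N)) : ℂ) := by rw [hzw, hzw2]; ring
    _ = _ := hc
  have h1 := keyS N z hzN hz1
  have h2 := keyS N w hwN hw1
  set Sz := ∑ j ∈ range N, (j : ℂ) * z ^ j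
  set Sw := ∑ j ∈ range N, (j : ℂ) * w ^ j
  have hmain : (4 * (Real.sin (π * k / N) : ℂ) ^ 2) * (Sz * Sw) = (N : ℂ) ^ 2 := by
    have h3 : ((z - 1) * Sz) * ((w - 1) * Sw) = (N : ℂ) * N := by rw [h1, h2]
    calc (4 * (Real.sin (π * k / N) : ℂ) ^ 2) * (Sz * Sw)
        = ((z - 1) * (w - 1)) * (Sz * Sw) := by rw [hprod]
    _ = ((z - 1) * Sz) * ((w - 1) * Sw) := by ring
    _ = (N : ℂ) ^ 2 := by rw [h3]; ring
  have hsinC : (Real.sin (π * k / N) : ℂ) ≠ 0 := Complex.ofReal_ne_zero.mpr hsin0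
  rw [Complex.ofReal_div, Complex.ofReal_one, Complex.ofReal_pow]
  set s : ℂ := ((Real.sin (π * k / N) : ℝ) : ℂ) with hs
  have hs0 : s ≠ 0 := hsinC
  field_simp
  linear_combination -hmain

theorem sum_inv_sin_sq (N : ℕ) (hN : 2 ≤ N) :
    ∑ k ∈ Finset.Icc 1 (N - 1), 1 / Real.sin (π * k / N) ^ 2 = ((N : ℝ) ^ 2 - 1) / 3 := by
  have hN0 : 0 < N := by omega
  have hNC : (N : ℂ) ≠ 0 := Nat.cast_ne_zero.mpr hN0.ne'
  set P : ℕ → ℂ := fun k =>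
    (∑ j ∈ range N, (j : ℂ) * ee N k ^ j) * (∑ j ∈ range N, (j : ℂ) * ee N (-k) ^ j) with hP
  have hP0 : P 0 = ((N : ℂ) * (N - 1) / 2) ^ 2 := by
    have h1 : ee N (0 : ℤ) = 1 := by simp [ee]
    simp only [hP, Nat.cast_zero, neg_zero, h1, one_pow, mul_one]
    rw [sum_id_range]
    ring
  have hFourier : ∑ k ∈ range N, P k = (N : ℂ) * ∑ j ∈ range N, (j : ℂ) ^ 2 := by
    have step1 : ∀ k, P k = ∑ j ∈ range N, ∑ j' ∈ range N,
        (j : ℂ) * (j' : ℂ) * ee N ((j : ℤ) - j') ^ k := by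
      intro k
      simp only [hP]
      rw [Finset.sum_mul_sum]
      refine Finset.sum_congr rfl fun j _ => Finset.sum_congr rfl fun j' _ => ?_
      rw [ee_pow, ee_pow, ee_pow]
      rw [show ((j : ℤ) - j') * k = (k : ℤ) * j + (-(k : ℤ)) * j' by ring, ← ee_mul]
      ring
    calc ∑ k ∈ range N, P k
        = ∑ j ∈ range N, ∑ j' ∈ range N,
            (j : ℂ) * (j' : ℂ) * ∑ k ∈ range N, ee N ((j : ℤ) - j') ^ k := by
          simp only [step1]
          rw [Finset.sum_comm]
          refine Finset.sum_congr rfl fun j _ => ?_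
          rw [Finset.sum_comm]
          refine Finset.sum_congr rfl fun j' _ => ?_
          rw [Finset.mul_sum]
      _ = ∑ j ∈ range N, (j : ℂ) ^ 2 * N := by
          refine Finset.sum_congr rfl fun j hj => ?_
          have hinner : ∀ j' ∈ range N,
              (j : ℂ) * j' * (∑ k ∈ range N, ee N ((j : ℤ) - j') ^ k)
                = if j' = j then (j : ℂ) * j * N else 0 := by
            intro j' hj'
            rw [ee_orth N hN0]
            rcases eq_or_ne j' j with h | h
            · subst h
              simp
            · have hnd : ¬ (N : ℤ) ∣ (j : ℤ) - j' := by
                intro hd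
                have hjN : j < N := Finset.mem_range.mp hj
                have hjN' : j' < N := Finset.mem_range.mp hj'
                have h0 := Int.eq_zero_of_abs_lt_dvd hd (by
                  rw [abs_sub_lt_iff]
                  constructor <;> omega)
                omega
              rw [if_neg hnd, if_neg h, mul_zero]
          rw [Finset.sum_congr rfl hinner,
            Finset.sum_ite_eq' (range N) j fun _ => (j : ℂ) * j * N, if_pos hj]
          ring
      _ = (N : ℂ) * ∑ j ∈ range N, (j : ℂ) ^ 2 := by
          rw [Finset.mul_sum]
          exact Finset.sum_congr rfl fun j _ => by ring
  have hsplit : ∑ k ∈ Finset.Icc 1 (N - 1), P k = (∑ k ∈ range N, P k) - P 0 := by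
    have hIco : Finset.Ico 1 N = Finset.Icc 1 (N - 1) := by
      rw [← Finset.Ico_add_one_right_eq_Icc]
      congr 1
      omega
    rw [Finset.range_eq_Ico, Finset.sum_eq_sum_Ico_succ_bot hN0, zero_add, hIco]
    ring
  have cx : ∑ k ∈ Finset.Icc 1 (N - 1), ((1 / Real.sin (π * k / N) ^ 2 : ℝ) : ℂ)
      = ((N : ℂ) ^ 2 - 1) / 3 := by
    rw [Finset.sum_congr rfl (fun k hk =>
      term_eq N hN k (Finset.mem_Icc.mp hk).1 (Finset.mem_Icc.mp hk).2)]
    rw [← Finset.mul_sum]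
    have : ∑ k ∈ Finset.Icc 1 (N - 1),
        (∑ j ∈ range N, (j : ℂ) * ee N k ^ j) * (∑ j ∈ range N, (j : ℂ) * ee N (-k) ^ j)
        = ∑ k ∈ Finset.Icc 1 (N - 1), P k := rfl
    rw [this, hsplit, hFourier, hP0, sum_sq_range]
    field_simp
    ring
  have := cx
  rw [← Complex.ofReal_sum] at this
  have h2 : ((∑ k ∈ Finset.Icc 1 (N - 1), 1 / Real.sin (π * k / N) ^ 2 : ℝ) : ℂ)
      = ((((N : ℝ) ^ 2 - 1) / 3 : ℝ) : ℂ) := by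
    rw [this]
    push_cast
    ring
  exact_mod_cast h2
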